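/- Equivalent form of the centre-of-spin condition: Let P ∈ ℝ⁴ be future-directed timelike with mc := √(−η(P,P)), let u ∈ ℝ⁴ be future-directed unit timelike, and let S_{μν} be any antisymmetric tensor on ℝ⁴. Define W_μ := −(1/2) ε_{μνρσ} P^ν S^{ρσ} (indices raised with η) and let B(u) be the boost given by B^μ{}_ν := δ^μ_ν + (P^μ/(mc) + u^μ)(P_ν/(mc) + u_ν)/(1 − η(u,P)/(mc)) − 2 u^μ P_ν/(mc). Then the centre-of-spin condition η_{μν}(B(u)(W^♯/(mc)))^ν = −(1/2) ε_{μνρσ} u^ν S^{ρσ} (for all μ) holds if and only if the 3-form u^♭ ∧ P^♭ ∧ (ι_{u+P/(mc)}S) vanishes, i.e. if and only if the total antisymmetrization over (μ,ν,ρ) of u_μ P_ν S_{ρσ}(u + P/(mc))^σ vanishes for all μ,ν,ρ. -/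

import Mathlib

noncomputable section

open scoped BigOperators

/-- The Minkowski bilinear form on `ℝ⁴`, signature `(-+++)`. -/
def mink (x y : Fin 4 → ℝ) : ℝ := -(x 0 * y 0) + x 1 * y 1 + x 2 * y 2 + x 3 * y 3

/-- Lowering (equivalently raising) an index with `η = diag(-1,1,1,1)`. -/
def low (v : Fin 4 → ℝ) : Fin 4 → ℝ := fun μ => if μ = 0 then -(v μ) else v μ

/-- `v` is future-directed timelike. -/
def FDTimelike (v : Fin 4 → ℝ) : Prop := mink v v < 0 ∧ 0 < v 0

/-- `v` is future-directed unit timelike. -/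
def FDUnitTimelike (v : Fin 4 → ℝ) : Prop := mink v v = -1 ∧ 0 < v 0

/-- `mc := √(−η(P,P))`. -/
def mcOf (P : Fin 4 → ℝ) : ℝ := Real.sqrt (-(mink P P))

/-- The spin tensor `S_{μν}(x) = J_{μν} − x_μ P_ν + x_ν P_μ` about the point `x`. -/
def spinTensor (J : Fin 4 → Fin 4 → ℝ) (P x : Fin 4 → ℝ) : Fin 4 → Fin 4 → ℝ :=
  fun μ ν => J μ ν - low x μ * low P ν + low x ν * low P μ

/-- The spin supplementary condition `S_{μν}(x) f^ν = 0` with respect to `f`. -/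
def SSC (J : Fin 4 → Fin 4 → ℝ) (P x f : Fin 4 → ℝ) : Prop :=
  ∀ μ, ∑ ν, spinTensor J P x μ ν * f ν = 0

/-- Lowered components of the Newton–Wigner position observable. -/
def nwLow (J : Fin 4 → Fin 4 → ℝ) (P u : Fin 4 → ℝ) (τ : ℝ) : Fin 4 → ℝ :=
  fun μ =>
    -(∑ ρ, J μ ρ * (u ρ + P ρ / mcOf P)) / (mcOf P - mink u P)
    + τ * low P μ / (-(mink u P))
    - ((∑ l, ∑ ρ, J l ρ * u l * P ρ) / (mcOf P * (mcOf P - mink u P)))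
        * low P μ / (-(mink u P))

/-- The Newton–Wigner position observable (as a point of `ℝ⁴`). -/
def nw (J : Fin 4 → Fin 4 → ℝ) (P u : Fin 4 → ℝ) (τ : ℝ) : Fin 4 → ℝ :=
  low (nwLow J P u τ)

/-- Sign of an integer, as a real number. -/
def sgnZ (n : ℤ) : ℝ := if 0 < n then 1 else if n < 0 then -1 else 0

/-- The totally antisymmetric symbol `ε_{μνρσ}` with `ε_{0123} = +1`. -/
def eps4 (μ ν ρ σ : Fin 4) : ℝ :=
  sgnZ ((ν.val : ℤ) - (μ.val : ℤ)) * sgnZ ((ρ.val : ℤ) - (μ.val : ℤ)) *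
  sgnZ ((σ.val : ℤ) - (μ.val : ℤ)) * sgnZ ((ρ.val : ℤ) - (ν.val : ℤ)) *
  sgnZ ((σ.val : ℤ) - (ν.val : ℤ)) * sgnZ ((σ.val : ℤ) - (ρ.val : ℤ))

/-- Both indices of a rank-2 tensor raised with `η = diag(-1,1,1,1)`:
`T^{ρσ} = η^{ρα} η^{σβ} T_{αβ}`. -/
def up2 (T : Fin 4 → Fin 4 → ℝ) : Fin 4 → Fin 4 → ℝ :=
  fun ρ σ => (if ρ = 0 then (-1 : ℝ) else 1) * (if σ = 0 then (-1 : ℝ) else 1) * T ρ σ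

/-- Lowered components of the Pauli–Lubański vector built from a rank-2 (spin/angular momentum)
tensor `T`: `W_μ = −(1/2) ε_{μνρσ} P^ν T^{ρσ}`. -/
def plLow (P : Fin 4 → ℝ) (T : Fin 4 → Fin 4 → ℝ) : Fin 4 → ℝ :=
  fun μ => -(1/2) * ∑ ν, ∑ ρ, ∑ σ, eps4 μ ν ρ σ * P ν * up2 T ρ σ

/-- The boost `B(u)` linking the momentum rest frame of `P` to the frame of `u`, in components:
`B^μ{}_ν = δ^μ_ν + (P^μ/(mc)+u^μ)(P_ν/(mc)+u_ν)/(1 − η(u,P)/(mc)) − 2u^μP_ν/(mc)`. -/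
def boostMat (P u : Fin 4 → ℝ) : Fin 4 → Fin 4 → ℝ :=
  fun μ ν =>
    (if μ = ν then (1 : ℝ) else 0)
    + (P μ / mcOf P + u μ) * (low P ν / mcOf P + low u ν) / (1 - mink u P / mcOf P)
    - 2 * u μ * low P ν / mcOf P

/-- Total antisymmetrization of `α_μ β_ν γ_ρ` over `(μ,ν,ρ)`. -/
def alt3 (α β γ : Fin 4 → ℝ) (μ ν ρ : Fin 4) : ℝ :=
  α μ * β ν * γ ρ - α μ * β ρ * γ ν + α ν * β ρ * γ μ
  - α ν * β μ * γ ρ + α ρ * β μ * γ ν - α ρ * β ν * γ μ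

set_option maxHeartbeats 16000000

lemma alt3_all_zero (α β γ : Fin 4 → ℝ)
    (h0 : alt3 α β γ 1 2 3 = 0) (h1 : alt3 α β γ 0 2 3 = 0)
    (h2 : alt3 α β γ 0 1 3 = 0) (h3 : alt3 α β γ 0 1 2 = 0) :
    ∀ μ ν ρ, alt3 α β γ μ ν ρ = 0 := by
  simp only [alt3] at h0 h1 h2 h3
  have c000 : alt3 α β γ 0 0 0 = 0 := by simp only [alt3]; linarith
  have c001 : alt3 α β γ 0 0 1 = 0 := by simp only [alt3]; linarith
  have c002 : alt3 α β γ 0 0 2 = 0 := by simp only [alt3]; linarith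
  have c003 : alt3 α β γ 0 0 3 = 0 := by simp only [alt3]; linarith
  have c010 : alt3 α β γ 0 1 0 = 0 := by simp only [alt3]; linarith
  have c011 : alt3 α β γ 0 1 1 = 0 := by simp only [alt3]; linarith
  have c012 : alt3 α β γ 0 1 2 = 0 := by simp only [alt3]; linarith
  have c013 : alt3 α β γ 0 1 3 = 0 := by simp only [alt3]; linarith
  have c020 : alt3 α β γ 0 2 0 = 0 := by simp only [alt3]; linarith
  have c021 : alt3 α β γ 0 2 1 = 0 := by simp only [alt3]; linarith
  have c022 : alt3 α β γ 0 2 2 = 0 := by simp only [alt3]; linarith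
  have c023 : alt3 α β γ 0 2 3 = 0 := by simp only [alt3]; linarith
  have c030 : alt3 α β γ 0 3 0 = 0 := by simp only [alt3]; linarith
  have c031 : alt3 α β γ 0 3 1 = 0 := by simp only [alt3]; linarith
  have c032 : alt3 α β γ 0 3 2 = 0 := by simp only [alt3]; linarith
  have c033 : alt3 α β γ 0 3 3 = 0 := by simp only [alt3]; linarith
  have c100 : alt3 α β γ 1 0 0 = 0 := by simp only [alt3]; linarith
  have c101 : alt3 α β γ 1 0 1 = 0 := by simp only [alt3]; linarith
  have c102 : alt3 α β γ 1 0 2 = 0 := by simp only [alt3]; linarith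
  have c103 : alt3 α β γ 1 0 3 = 0 := by simp only [alt3]; linarith
  have c110 : alt3 α β γ 1 1 0 = 0 := by simp only [alt3]; linarith
  have c111 : alt3 α β γ 1 1 1 = 0 := by simp only [alt3]; linarith
  have c112 : alt3 α β γ 1 1 2 = 0 := by simp only [alt3]; linarith
  have c113 : alt3 α β γ 1 1 3 = 0 := by simp only [alt3]; linarith
  have c120 : alt3 α β γ 1 2 0 = 0 := by simp only [alt3]; linarith
  have c121 : alt3 α β γ 1 2 1 = 0 := by simp only [alt3]; linarith
  have c122 : alt3 α β γ 1 2 2 = 0 := by simp only [alt3]; linarith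
  have c123 : alt3 α β γ 1 2 3 = 0 := by simp only [alt3]; linarith
  have c130 : alt3 α β γ 1 3 0 = 0 := by simp only [alt3]; linarith
  have c131 : alt3 α β γ 1 3 1 = 0 := by simp only [alt3]; linarith
  have c132 : alt3 α β γ 1 3 2 = 0 := by simp only [alt3]; linarith
  have c133 : alt3 α β γ 1 3 3 = 0 := by simp only [alt3]; linarith
  have c200 : alt3 α β γ 2 0 0 = 0 := by simp only [alt3]; linarith
  have c201 : alt3 α β γ 2 0 1 = 0 := by simp only [alt3]; linarith
  have c202 : alt3 α β γ 2 0 2 = 0 := by simp only [alt3]; linarith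
  have c203 : alt3 α β γ 2 0 3 = 0 := by simp only [alt3]; linarith
  have c210 : alt3 α β γ 2 1 0 = 0 := by simp only [alt3]; linarith
  have c211 : alt3 α β γ 2 1 1 = 0 := by simp only [alt3]; linarith
  have c212 : alt3 α β γ 2 1 2 = 0 := by simp only [alt3]; linarith
  have c213 : alt3 α β γ 2 1 3 = 0 := by simp only [alt3]; linarith
  have c220 : alt3 α β γ 2 2 0 = 0 := by simp only [alt3]; linarith
  have c221 : alt3 α β γ 2 2 1 = 0 := by simp only [alt3]; linarith
  have c222 : alt3 α β γ 2 2 2 = 0 := by simp only [alt3]; linarith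
  have c223 : alt3 α β γ 2 2 3 = 0 := by simp only [alt3]; linarith
  have c230 : alt3 α β γ 2 3 0 = 0 := by simp only [alt3]; linarith
  have c231 : alt3 α β γ 2 3 1 = 0 := by simp only [alt3]; linarith
  have c232 : alt3 α β γ 2 3 2 = 0 := by simp only [alt3]; linarith
  have c233 : alt3 α β γ 2 3 3 = 0 := by simp only [alt3]; linarith
  have c300 : alt3 α β γ 3 0 0 = 0 := by simp only [alt3]; linarith
  have c301 : alt3 α β γ 3 0 1 = 0 := by simp only [alt3]; linarith
  have c302 : alt3 α β γ 3 0 2 = 0 := by simp only [alt3]; linarith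
  have c303 : alt3 α β γ 3 0 3 = 0 := by simp only [alt3]; linarith
  have c310 : alt3 α β γ 3 1 0 = 0 := by simp only [alt3]; linarith
  have c311 : alt3 α β γ 3 1 1 = 0 := by simp only [alt3]; linarith
  have c312 : alt3 α β γ 3 1 2 = 0 := by simp only [alt3]; linarith
  have c313 : alt3 α β γ 3 1 3 = 0 := by simp only [alt3]; linarith
  have c320 : alt3 α β γ 3 2 0 = 0 := by simp only [alt3]; linarith
  have c321 : alt3 α β γ 3 2 1 = 0 := by simp only [alt3]; linarith
  have c322 : alt3 α β γ 3 2 2 = 0 := by simp only [alt3]; linarith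
  have c323 : alt3 α β γ 3 2 3 = 0 := by simp only [alt3]; linarith
  have c330 : alt3 α β γ 3 3 0 = 0 := by simp only [alt3]; linarith
  have c331 : alt3 α β γ 3 3 1 = 0 := by simp only [alt3]; linarith
  have c332 : alt3 α β γ 3 3 2 = 0 := by simp only [alt3]; linarith
  have c333 : alt3 α β γ 3 3 3 = 0 := by simp only [alt3]; linarith
  intro μ ν ρ
  fin_cases μ <;> fin_cases ν <;> fin_cases ρ
  · exact c000
  · exact c001
  · exact c002
  · exact c003
  · exact c010
  · exact c011
  · exact c012
  · exact c013
  · exact c020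
  · exact c021
  · exact c022
  · exact c023
  · exact c030
  · exact c031
  · exact c032
  · exact c033
  · exact c100
  · exact c101
  · exact c102
  · exact c103
  · exact c110
  · exact c111
  · exact c112
  · exact c113
  · exact c120
  · exact c121
  · exact c122
  · exact c123
  · exact c130
  · exact c131
  · exact c132
  · exact c133
  · exact c200
  · exact c201
  · exact c202
  · exact c203
  · exact c210
  · exact c211
  · exact c212
  · exact c213
  · exact c220
  · exact c221
  · exact c222
  · exact c223
  · exact c230
  · exact c231
  · exact c232
  · exact c233
  · exact c300
  · exact c301
  · exact c302
  · exact c303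
  · exact c310
  · exact c311
  · exact c312
  · exact c313
  · exact c320
  · exact c321
  · exact c322
  · exact c323
  · exact c330
  · exact c331
  · exact c332
  · exact c333

/-- **Equivalent form of the centre-of-spin condition**: with `W_μ = −(1/2)ε_{μνρσ}P^νS^{ρσ}` and
`B(u)` the standard boost, the condition `η_{μν}(B(u)(W^♯/(mc)))^ν = −(1/2)ε_{μνρσ}u^νS^{ρσ}`
holds iff the 3-form `u^♭ ∧ P^♭ ∧ (ι_{u+P/(mc)}S)` vanishes. -/

theorem centre_of_spin_condition_iff
    (P : Fin 4 → ℝ) (hP : FDTimelike P)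
    (u : Fin 4 → ℝ) (hu : FDUnitTimelike u)
    (S : Fin 4 → Fin 4 → ℝ) (hS : ∀ μ ν, S μ ν = -S ν μ) :
    (∀ μ, low (fun κ => ∑ ν, boostMat P u κ ν * (low (plLow P S) ν / mcOf P)) μ
        = -(1/2) * ∑ ν, ∑ ρ, ∑ σ, eps4 μ ν ρ σ * u ν * up2 S ρ σ)
    ↔ (∀ μ ν ρ, alt3 (low u) (low P)
        (fun κ => ∑ σ, S κ σ * (u σ + P σ / mcOf P)) μ ν ρ = 0) := by

  have hPP : mink P P < 0 := hP.1
  have hm0 : 0 < mcOf P := Real.sqrt_pos.mpr (by linarith)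
  have hm2 : mcOf P ^ 2 = P 0 ^ 2 - P 1 ^ 2 - P 2 ^ 2 - P 3 ^ 2 := by
    have h := Real.sq_sqrt (by linarith : (0:ℝ) ≤ -(mink P P))
    simp only [mcOf]; rw [h]; simp only [mink]; ring
  have huu : u 0 ^ 2 = 1 + u 1 ^ 2 + u 2 ^ 2 + u 3 ^ 2 := by
    have h := hu.1; simp only [mink] at h; linear_combination -h
  have hadef : mink u P = -(u 0 * P 0) + u 1 * P 1 + u 2 * P 2 + u 3 * P 3 := rfl
  have ha : mink u P < 0 := by
    have h := hu.1; simp only [mink] at h ⊢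
    nlinarith [sq_nonneg (u 1 * P 2 - u 2 * P 1), sq_nonneg (u 1 * P 3 - u 3 * P 1),
      sq_nonneg (u 2 * P 3 - u 3 * P 2), mul_pos hu.2 hP.2, hP.1,
      sq_nonneg (u 0 * P 0 - (u 1 * P 1 + u 2 * P 2 + u 3 * P 3)),
      sq_nonneg (u 0 * P 0 + (u 1 * P 1 + u 2 * P 2 + u 3 * P 3)), mink P P, hu.2, hP.2]
  have hma : (0:ℝ) < mcOf P - mink u P := by linarith
  have hmne := hm0.ne'
  have hmane := hma.ne'
  have h00 : S 0 0 = 0 := by have := hS 0 0; linarith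
  have h11 : S 1 1 = 0 := by have := hS 1 1; linarith
  have h22 : S 2 2 = 0 := by have := hS 2 2; linarith
  have h33 : S 3 3 = 0 := by have := hS 3 3; linarith
  have hmane2 : mcOf P - (-(u 0 * P 0) + u 1 * P 1 + u 2 * P 2 + u 3 * P 3) ≠ 0 := by
    rw [← hadef]; exact hmane
  have h1eq : 1 - (-(u 0 * P 0) + u 1 * P 1 + u 2 * P 2 + u 3 * P 3) / mcOf P
      = (mcOf P - (-(u 0 * P 0) + u 1 * P 1 + u 2 * P 2 + u 3 * P 3)) / mcOf P := by
    field_simp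
  have hV0 : (∑ ν, boostMat P u (0:Fin 4) ν * (low (plLow P S) ν / mcOf P))
      = ((-1) * mcOf P * P 3 ^ 2 * u 3 * S 1 2 + (1) * mcOf P * P 2 * P 3 * u 3 * S 1 3 + (-1) * mcOf P * P 2 * P 3 * u 2 * S 1 2 + (1) * mcOf P * P 2 ^ 2 * u 2 * S 1 3 + (-1) * mcOf P * P 1 * P 3 * u 3 * S 2 3 + (-1) * mcOf P * P 1 * P 3 * u 1 * S 1 2 + (-1) * mcOf P * P 1 * P 2 * u 2 * S 2 3 + (1) * mcOf P * P 1 * P 2 * u 1 * S 1 3 + (-1) * mcOf P * P 1 ^ 2 * u 1 * S 2 3 + (1) * mcOf P * P 0 * P 3 * u 2 * S 0 1 + (-1) * mcOf P * P 0 * P 3 * u 1 * S 0 2 + (-1) * mcOf P * P 0 * P 2 * u 3 * S 0 1 + (1) * mcOf P * P 0 * P 2 * u 1 * S 0 3 + (1) * mcOf P * P 0 * P 1 * u 3 * S 0 2 + (-1) * mcOf P * P 0 * P 1 * u 2 * S 0 3 + (1) * mcOf P * P 0 ^ 2 * u 3 * S 1 2 + (-1) * mcOf P * P 0 ^ 2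 * u 2 * S 1 3 + (1) * mcOf P * P 0 ^ 2 * u 1 * S 2 3 + (1) * mcOf P ^ 2 * P 3 * S 1 2 + (1) * mcOf P ^ 2 * P 3 * u 0 * u 2 * S 0 1 + (-1) * mcOf P ^ 2 * P 3 * u 0 * u 1 * S 0 2 + (-1) * mcOf P ^ 2 * P 3 * u 0 ^ 2 * S 1 2 + (-1) * mcOf P ^ 2 * P 2 * S 1 3 + (-1) * mcOf P ^ 2 * P 2 * u 0 * u 3 * S 0 1 + (1) * mcOf P ^ 2 * P 2 * u 0 * u 1 * S 0 3 + (1) * mcOf P ^ 2 * P 2 * u 0 ^ 2 * S 1 3 + (1) * mcOf P ^ 2 * P 1 * S 2 3 + (1) * mcOf P ^ 2 * P 1 * u 0 * u 3 * S 0 2 + (-1) * mcOf P ^ 2 * P 1 * u 0 * u 2 * S 0 3 + (-1) * mcOf P ^ 2 * P 1 * u 0 ^ 2 * S 2 3 + (1) * mcOf P ^ 2 * P 0 * u 0 * u 3 * S 1 2 + (-1) * mcOf P ^ 2 * P 0 * u 0 * u 2 * S 1 3 + (1) * mcOf P ^ 2 * P 0 * u 0 * u 1 * S 2 3) / (mcOf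 P * mcOf P * (mcOf P - mink u P)) := by
    rw [eq_div_iff (mul_ne_zero (mul_ne_zero hmne hmne) hmane)]
    simp only [low, boostMat, plLow, up2, eps4, sgnZ, mink, alt3, Fin.sum_univ_four,
      show ((0:Fin 4).val:ℤ) = 0 from rfl, show ((1:Fin 4).val:ℤ) = 1 from rfl,
      show ((2:Fin 4).val:ℤ) = 2 from rfl, show ((3:Fin 4).val:ℤ) = 3 from rfl]
    norm_num [(by decide : (0:Fin 4) ≠ 1), (by decide : (0:Fin 4) ≠ 2), (by decide : (0:Fin 4) ≠ 3), (by decide : (1:Fin 4) ≠ 0), (by decide : (1:Fin 4) ≠ 2), (by decide : (1:Fin 4) ≠ 3), (by decide : (2:Fin 4) ≠ 0), (by decide : (2:Fin 4) ≠ 1), (by decide : (2:Fin 4) ≠ 3), (by decide : (3:Fin 4) ≠ 0), (by decide : (3:Fin 4) ≠ 1), (by decide : (3:Fin 4) ≠ 2), hS 1 0, hS 2 0, hS 3 0, hS 2 1, hS 3 1, hS 3 2, h00, h11, h22, h33]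
    simp only [h1eq, div_div_eq_mul_div]
    field_simp
    have hmane3 : mcOf P - (-(P 0 * u 0) + u 1 * P 1 + u 2 * P 2 + u 3 * P 3) ≠ 0 := by
      rw [mul_comm (P 0)]; exact hmane2
    field_simp
    ring
  have hV1 : (∑ ν, boostMat P u (1:Fin 4) ν * (low (plLow P S) ν / mcOf P))
      = ((1) * mcOf P * P 3 ^ 2 * u 3 * S 0 2 + (-1) * mcOf P * P 2 * P 3 * u 3 * S 0 3 + (1) * mcOf P * P 2 * P 3 * u 2 * S 0 2 + (-1) * mcOf P * P 2 ^ 2 * u 2 * S 0 3 + (1) * mcOf P * P 1 * P 3 * u 2 * S 0 1 + (-1) * mcOf P * P 1 * P 3 * u 0 * S 1 2 + (-1) * mcOf P * P 1 * P 2 * u 3 * S 0 1 + (1) * mcOf P * P 1 * P 2 * u 0 * S 1 3 + (1) * mcOf P * P 1 ^ 2 * u 3 * S 0 2 + (-1) * mcOf P * P 1 ^ 2 * u 2 * S 0 3 + (-1) * mcOf P * P 1 ^ 2 * u 0 * S 2 3 + (-1) * mcOf P * P 0 * P 3 * u 3 * S 2 3 + (-1) * mcOf P * P 0 * P 3 *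 u 0 * S 0 2 + (-1) * mcOf P * P 0 * P 2 * u 2 * S 2 3 + (1) * mcOf P * P 0 * P 2 * u 0 * S 0 3 + (1) * mcOf P * P 0 * P 1 * u 3 * S 1 2 + (-1) * mcOf P * P 0 * P 1 * u 2 * S 1 3 + (1) * mcOf P * P 0 ^ 2 * u 0 * S 2 3 + (-1) * mcOf P ^ 2 * P 3 * S 0 2 + (1) * mcOf P ^ 2 * P 3 * u 1 * u 2 * S 0 1 + (-1) * mcOf P ^ 2 * P 3 * u 1 ^ 2 * S 0 2 + (-1) * mcOf P ^ 2 * P 3 * u 0 * u 1 * S 1 2 + (1) * mcOf P ^ 2 * P 2 * S 0 3 + (-1) * mcOf P ^ 2 * P 2 * u 1 * u 3 * S 0 1 + (1) * mcOf P ^ 2 * P 2 * u 1 ^ 2 * S 0 3 + (1) * mcOf P ^ 2 * P 2 * u 0 * u 1 * S 1 3 + (1) * mcOf P ^ 2 * P 1 * u 1 * u 3 * S 0 2 + (-1) * mcOf P ^ 2 * P 1 * u 1 * u 2 * S 0 3 + (-1) * mcOf P ^ 2 * P 1 * u 0 * u 1 * S 2 3 + (1) * mcOf P ^ 2 * P 0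 * S 2 3 + (1) * mcOf P ^ 2 * P 0 * u 1 * u 3 * S 1 2 + (-1) * mcOf P ^ 2 * P 0 * u 1 * u 2 * S 1 3 + (1) * mcOf P ^ 2 * P 0 * u 1 ^ 2 * S 2 3) / (mcOf P * mcOf P * (mcOf P - mink u P)) := by
    rw [eq_div_iff (mul_ne_zero (mul_ne_zero hmne hmne) hmane)]
    simp only [low, boostMat, plLow, up2, eps4, sgnZ, mink, alt3, Fin.sum_univ_four,
      show ((0:Fin 4).val:ℤ) = 0 from rfl, show ((1:Fin 4).val:ℤ) = 1 from rfl,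
      show ((2:Fin 4).val:ℤ) = 2 from rfl, show ((3:Fin 4).val:ℤ) = 3 from rfl]
    norm_num [(by decide : (0:Fin 4) ≠ 1), (by decide : (0:Fin 4) ≠ 2), (by decide : (0:Fin 4) ≠ 3), (by decide : (1:Fin 4) ≠ 0), (by decide : (1:Fin 4) ≠ 2), (by decide : (1:Fin 4) ≠ 3), (by decide : (2:Fin 4) ≠ 0), (by decide : (2:Fin 4) ≠ 1), (by decide : (2:Fin 4) ≠ 3), (by decide : (3:Fin 4) ≠ 0), (by decide : (3:Fin 4) ≠ 1), (by decide : (3:Fin 4) ≠ 2), hS 1 0, hS 2 0, hS 3 0, hS 2 1, hS 3 1, hS 3 2, h00, h11, h22, h33]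
    simp only [h1eq, div_div_eq_mul_div]
    field_simp
    have hmane3 : mcOf P - (-(P 0 * u 0) + P 1 * u 1 + u 2 * P 2 + u 3 * P 3) ≠ 0 := by
      rw [mul_comm (P 0), mul_comm (P 1)]; exact hmane2
    field_simp
    ring
  have hV2 : (∑ ν, boostMat P u (2:Fin 4) ν * (low (plLow P S) ν / mcOf P))
      = ((-1) * mcOf P * P 3 ^ 2 * u 3 * S 0 1 + (-1) * mcOf P * P 2 * P 3 * u 1 * S 0 2 + (-1) * mcOf P * P 2 * P 3 * u 0 * S 1 2 + (-1) * mcOf P * P 2 ^ 2 * u 3 * S 0 1 + (1) * mcOf P * P 2 ^ 2 * u 1 * S 0 3 + (1) * mcOf P * P 2 ^ 2 * u 0 * S 1 3 + (1) * mcOf P * P 1 * P 3 * u 3 * S 0 3 + (-1) * mcOf P * P 1 * P 3 * u 1 * S 0 1 + (1) * mcOf P * P 1 * P 2 * u 3 * S 0 2 + (-1) * mcOf P * P 1 * P 2 * u 0 * S 2 3 + (1) * mcOf P * P 1 ^ 2 * u 1 * S 0 3 + (1) * mcOf P * P 0 * P 3 * u 3 * S 1 3 + (1) * mcOf P * P 0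 * P 3 * u 0 * S 0 1 + (1) * mcOf P * P 0 * P 2 * u 3 * S 1 2 + (1) * mcOf P * P 0 * P 2 * u 1 * S 2 3 + (1) * mcOf P * P 0 * P 1 * u 1 * S 1 3 + (-1) * mcOf P * P 0 * P 1 * u 0 * S 0 3 + (-1) * mcOf P * P 0 ^ 2 * u 0 * S 1 3 + (1) * mcOf P ^ 2 * P 3 * S 0 1 + (1) * mcOf P ^ 2 * P 3 * u 2 ^ 2 * S 0 1 + (-1) * mcOf P ^ 2 * P 3 * u 1 * u 2 * S 0 2 + (-1) * mcOf P ^ 2 * P 3 * u 0 * u 2 * S 1 2 + (-1) * mcOf P ^ 2 * P 2 * u 2 * u 3 * S 0 1 + (1) * mcOf P ^ 2 * P 2 * u 1 * u 2 * S 0 3 + (1) * mcOf P ^ 2 * P 2 * u 0 * u 2 * S 1 3 + (-1) * mcOf P ^ 2 * P 1 * S 0 3 + (1) * mcOf P ^ 2 * P 1 * u 2 * u 3 * S 0 2 + (-1) * mcOf P ^ 2 * P 1 * u 2 ^ 2 * S 0 3 + (-1) * mcOf P ^ 2 * P 1 * u 0 * u 2 * S 2 3 + (-1) * mcOf P ^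 2 * P 0 * S 1 3 + (1) * mcOf P ^ 2 * P 0 * u 2 * u 3 * S 1 2 + (-1) * mcOf P ^ 2 * P 0 * u 2 ^ 2 * S 1 3 + (1) * mcOf P ^ 2 * P 0 * u 1 * u 2 * S 2 3) / (mcOf P * mcOf P * (mcOf P - mink u P)) := by
    rw [eq_div_iff (mul_ne_zero (mul_ne_zero hmne hmne) hmane)]
    simp only [low, boostMat, plLow, up2, eps4, sgnZ, mink, alt3, Fin.sum_univ_four,
      show ((0:Fin 4).val:ℤ) = 0 from rfl, show ((1:Fin 4).val:ℤ) = 1 from rfl,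
      show ((2:Fin 4).val:ℤ) = 2 from rfl, show ((3:Fin 4).val:ℤ) = 3 from rfl]
    norm_num [(by decide : (0:Fin 4) ≠ 1), (by decide : (0:Fin 4) ≠ 2), (by decide : (0:Fin 4) ≠ 3), (by decide : (1:Fin 4) ≠ 0), (by decide : (1:Fin 4) ≠ 2), (by decide : (1:Fin 4) ≠ 3), (by decide : (2:Fin 4) ≠ 0), (by decide : (2:Fin 4) ≠ 1), (by decide : (2:Fin 4) ≠ 3), (by decide : (3:Fin 4) ≠ 0), (by decide : (3:Fin 4) ≠ 1), (by decide : (3:Fin 4) ≠ 2), hS 1 0, hS 2 0, hS 3 0, hS 2 1, hS 3 1, hS 3 2, h00, h11, h22, h33]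
    simp only [h1eq, div_div_eq_mul_div]
    field_simp
    have hmane3 : mcOf P - (-(P 0 * u 0) + u 1 * P 1 + P 2 * u 2 + u 3 * P 3) ≠ 0 := by
      rw [mul_comm (P 0), mul_comm (P 2)]; exact hmane2
    field_simp
    ring
  have hV3 : (∑ ν, boostMat P u (3:Fin 4) ν * (low (plLow P S) ν / mcOf P))
      = ((1) * mcOf P * P 3 ^ 2 * u 2 * S 0 1 + (-1) * mcOf P * P 3 ^ 2 * u 1 * S 0 2 + (-1) * mcOf P * P 3 ^ 2 * u 0 * S 1 2 + (1) * mcOf P * P 2 * P 3 * u 1 * S 0 3 + (1) * mcOf P * P 2 * P 3 * u 0 * S 1 3 + (1) * mcOf P * P 2 ^ 2 * u 2 * S 0 1 + (-1) * mcOf P * P 1 * P 3 * u 2 * S 0 3 + (-1) * mcOf P * P 1 * P 3 * u 0 * S 2 3 + (-1) * mcOf P * P 1 * P 2 * u 2 * S 0 2 + (1) * mcOf P * P 1 * P 2 * u 1 * S 0 1 + (-1) * mcOf P * P 1 ^ 2 * u 1 * S 0 2 + (-1) * mcOf P * P 0 * P 3 * u 2 * S 1 3 + (1) * mcOf P * P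 0 * P 3 * u 1 * S 2 3 + (-1) * mcOf P * P 0 * P 2 * u 2 * S 1 2 + (-1) * mcOf P * P 0 * P 2 * u 0 * S 0 1 + (-1) * mcOf P * P 0 * P 1 * u 1 * S 1 2 + (1) * mcOf P * P 0 * P 1 * u 0 * S 0 2 + (1) * mcOf P * P 0 ^ 2 * u 0 * S 1 2 + (1) * mcOf P ^ 2 * P 3 * u 2 * u 3 * S 0 1 + (-1) * mcOf P ^ 2 * P 3 * u 1 * u 3 * S 0 2 + (-1) * mcOf P ^ 2 * P 3 * u 0 * u 3 * S 1 2 + (-1) * mcOf P ^ 2 * P 2 * S 0 1 + (-1) * mcOf P ^ 2 * P 2 * u 3 ^ 2 * S 0 1 + (1) * mcOf P ^ 2 * P 2 * u 1 * u 3 * S 0 3 + (1) * mcOf P ^ 2 * P 2 * u 0 * u 3 * S 1 3 + (1) * mcOf P ^ 2 * P 1 * S 0 2 + (1) * mcOf P ^ 2 * P 1 * u 3 ^ 2 * S 0 2 + (-1) * mcOf P ^ 2 * P 1 * u 2 * u 3 * S 0 3 + (-1) * mcOf P ^ 2 * P 1 * u 0 * u 3 * S 2 3 + (1) * mcOf P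 ^ 2 * P 0 * S 1 2 + (1) * mcOf P ^ 2 * P 0 * u 3 ^ 2 * S 1 2 + (-1) * mcOf P ^ 2 * P 0 * u 2 * u 3 * S 1 3 + (1) * mcOf P ^ 2 * P 0 * u 1 * u 3 * S 2 3) / (mcOf P * mcOf P * (mcOf P - mink u P)) := by
    rw [eq_div_iff (mul_ne_zero (mul_ne_zero hmne hmne) hmane)]
    simp only [low, boostMat, plLow, up2, eps4, sgnZ, mink, alt3, Fin.sum_univ_four,
      show ((0:Fin 4).val:ℤ) = 0 from rfl, show ((1:Fin 4).val:ℤ) = 1 from rfl,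
      show ((2:Fin 4).val:ℤ) = 2 from rfl, show ((3:Fin 4).val:ℤ) = 3 from rfl]
    norm_num [(by decide : (0:Fin 4) ≠ 1), (by decide : (0:Fin 4) ≠ 2), (by decide : (0:Fin 4) ≠ 3), (by decide : (1:Fin 4) ≠ 0), (by decide : (1:Fin 4) ≠ 2), (by decide : (1:Fin 4) ≠ 3), (by decide : (2:Fin 4) ≠ 0), (by decide : (2:Fin 4) ≠ 1), (by decide : (2:Fin 4) ≠ 3), (by decide : (3:Fin 4) ≠ 0), (by decide : (3:Fin 4) ≠ 1), (by decide : (3:Fin 4) ≠ 2), hS 1 0, hS 2 0, hS 3 0, hS 2 1, hS 3 1, hS 3 2, h00, h11, h22, h33]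
    simp only [h1eq, div_div_eq_mul_div]
    field_simp
    have hmane3 : mcOf P - (-(P 0 * u 0) + u 1 * P 1 + u 2 * P 2 + P 3 * u 3) ≠ 0 := by
      rw [mul_comm (P 0), mul_comm (P 3)]; exact hmane2
    field_simp
    ring
  have key0 : low (fun κ => ∑ ν, boostMat P u κ ν * (low (plLow P S) ν / mcOf P)) 0
      - (-(1/2) * ∑ ν, ∑ ρ, ∑ σ, eps4 0 ν ρ σ * u ν * up2 S ρ σ)
      = (alt3 (low u) (low P) (fun κ => ∑ σ, S κ σ * (u σ + P σ / mcOf P)) 1 2 3)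
          / (mcOf P - mink u P) := by
    have hlow : low (fun κ => ∑ ν, boostMat P u κ ν * (low (plLow P S) ν / mcOf P)) 0
        = -(∑ ν, boostMat P u (0:Fin 4) ν * (low (plLow P S) ν / mcOf P)) := rfl
    rw [hlow, hV0]
    simp only [up2, eps4, sgnZ, alt3, low, Fin.sum_univ_four,
      show ((0:Fin 4).val:ℤ) = 0 from rfl, show ((1:Fin 4).val:ℤ) = 1 from rfl,
      show ((2:Fin 4).val:ℤ) = 2 from rfl, show ((3:Fin 4).val:ℤ) = 3 from rfl]
    norm_num [(by decide : (0:Fin 4) ≠ 1), (by decide : (0:Fin 4) ≠ 2), (by decide : (0:Fin 4) ≠ 3), (by decide : (1:Fin 4) ≠ 0), (by decide : (1:Fin 4) ≠ 2), (by decide : (1:Fin 4) ≠ 3), (by decide : (2:Fin 4) ≠ 0), (by decide : (2:Fin 4) ≠ 1), (by decide : (2:Fin 4) ≠ 3), (by decide : (3:Fin 4) ≠ 0), (by decide : (3:Fin 4) ≠ 1), (by decide : (3:Fin 4) ≠ 2), hS 1 0, hS 2 0, hS 3 0, hS 2 1, hS 3 1, hS 3 2, h00, h11, h22, h33]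
    field_simp
    linear_combination ((-2) * S 2 3 * mcOf P * u 1 + (2) * S 1 3 * mcOf P * u 2 + (-2) * S 1 2 * mcOf P * u 3) * hadef + ((2) * P 3 * S 1 2 * mcOf P + (-2) * P 2 * S 1 3 * mcOf P + (2) * P 1 * S 2 3 * mcOf P) * huu + ((2) * S 2 3 * u 1 + (-2) * S 1 3 * u 2 + (2) * S 1 2 * u 3) * hm2
  have key1 : low (fun κ => ∑ ν, boostMat P u κ ν * (low (plLow P S) ν / mcOf P)) 1
      - (-(1/2) * ∑ ν, ∑ ρ, ∑ σ, eps4 1 ν ρ σ * u ν * up2 S ρ σ)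
      = (alt3 (low u) (low P) (fun κ => ∑ σ, S κ σ * (u σ + P σ / mcOf P)) 0 2 3)
          / (mcOf P - mink u P) := by
    have hlow : low (fun κ => ∑ ν, boostMat P u κ ν * (low (plLow P S) ν / mcOf P)) 1
        = (∑ ν, boostMat P u (1:Fin 4) ν * (low (plLow P S) ν / mcOf P)) := rfl
    rw [hlow, hV1]
    simp only [up2, eps4, sgnZ, alt3, low, Fin.sum_univ_four,
      show ((0:Fin 4).val:ℤ) = 0 from rfl, show ((1:Fin 4).val:ℤ) = 1 from rfl,
      show ((2:Fin 4).val:ℤ) = 2 from rfl, show ((3:Fin 4).val:ℤ) = 3 from rfl]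
    norm_num [(by decide : (0:Fin 4) ≠ 1), (by decide : (0:Fin 4) ≠ 2), (by decide : (0:Fin 4) ≠ 3), (by decide : (1:Fin 4) ≠ 0), (by decide : (1:Fin 4) ≠ 2), (by decide : (1:Fin 4) ≠ 3), (by decide : (2:Fin 4) ≠ 0), (by decide : (2:Fin 4) ≠ 1), (by decide : (2:Fin 4) ≠ 3), (by decide : (3:Fin 4) ≠ 0), (by decide : (3:Fin 4) ≠ 1), (by decide : (3:Fin 4) ≠ 2), hS 1 0, hS 2 0, hS 3 0, hS 2 1, hS 3 1, hS 3 2, h00, h11, h22, h33]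
    field_simp
    linear_combination ((2) * S 2 3 * mcOf P * u 0 + (2) * S 0 3 * mcOf P * u 2 + (-2) * S 0 2 * mcOf P * u 3) * hadef + ((-2) * P 2 * S 0 3 * mcOf P + (2) * P 3 * S 0 2 * mcOf P + (-2) * P 0 * S 2 3 * mcOf P) * huu + ((-2) * S 2 3 * u 0 + (-2) * S 0 3 * u 2 + (2) * S 0 2 * u 3) * hm2
  have key2 : low (fun κ => ∑ ν, boostMat P u κ ν * (low (plLow P S) ν / mcOf P)) 2
      - (-(1/2) * ∑ ν, ∑ ρ, ∑ σ, eps4 2 ν ρ σ * u ν * up2 S ρ σ)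
      = -(alt3 (low u) (low P) (fun κ => ∑ σ, S κ σ * (u σ + P σ / mcOf P)) 0 1 3)
          / (mcOf P - mink u P) := by
    have hlow : low (fun κ => ∑ ν, boostMat P u κ ν * (low (plLow P S) ν / mcOf P)) 2
        = (∑ ν, boostMat P u (2:Fin 4) ν * (low (plLow P S) ν / mcOf P)) := rfl
    rw [hlow, hV2]
    simp only [up2, eps4, sgnZ, alt3, low, Fin.sum_univ_four,
      show ((0:Fin 4).val:ℤ) = 0 from rfl, show ((1:Fin 4).val:ℤ) = 1 from rfl,
      show ((2:Fin 4).val:ℤ) = 2 from rfl, show ((3:Fin 4).val:ℤ) = 3 from rfl]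
    norm_num [(by decide : (0:Fin 4) ≠ 1), (by decide : (0:Fin 4) ≠ 2), (by decide : (0:Fin 4) ≠ 3), (by decide : (1:Fin 4) ≠ 0), (by decide : (1:Fin 4) ≠ 2), (by decide : (1:Fin 4) ≠ 3), (by decide : (2:Fin 4) ≠ 0), (by decide : (2:Fin 4) ≠ 1), (by decide : (2:Fin 4) ≠ 3), (by decide : (3:Fin 4) ≠ 0), (by decide : (3:Fin 4) ≠ 1), (by decide : (3:Fin 4) ≠ 2), hS 1 0, hS 2 0, hS 3 0, hS 2 1, hS 3 1, hS 3 2, h00, h11, h22, h33]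
    field_simp
    linear_combination ((-2) * S 1 3 * mcOf P * u 0 + (-2) * S 0 3 * mcOf P * u 1 + (2) * S 0 1 * mcOf P * u 3) * hadef + ((2) * P 1 * S 0 3 * mcOf P + (-2) * P 3 * S 0 1 * mcOf P + (2) * P 0 * S 1 3 * mcOf P) * huu + ((2) * S 1 3 * u 0 + (2) * S 0 3 * u 1 + (-2) * S 0 1 * u 3) * hm2
  have key3 : low (fun κ => ∑ ν, boostMat P u κ ν * (low (plLow P S) ν / mcOf P)) 3
      - (-(1/2) * ∑ ν, ∑ ρ, ∑ σ, eps4 3 ν ρ σ * u ν * up2 S ρ σ)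
      = (alt3 (low u) (low P) (fun κ => ∑ σ, S κ σ * (u σ + P σ / mcOf P)) 0 1 2)
          / (mcOf P - mink u P) := by
    have hlow : low (fun κ => ∑ ν, boostMat P u κ ν * (low (plLow P S) ν / mcOf P)) 3
        = (∑ ν, boostMat P u (3:Fin 4) ν * (low (plLow P S) ν / mcOf P)) := rfl
    rw [hlow, hV3]
    simp only [up2, eps4, sgnZ, alt3, low, Fin.sum_univ_four,
      show ((0:Fin 4).val:ℤ) = 0 from rfl, show ((1:Fin 4).val:ℤ) = 1 from rfl,
      show ((2:Fin 4).val:ℤ) = 2 from rfl, show ((3:Fin 4).val:ℤ) = 3 from rfl]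
    norm_num [(by decide : (0:Fin 4) ≠ 1), (by decide : (0:Fin 4) ≠ 2), (by decide : (0:Fin 4) ≠ 3), (by decide : (1:Fin 4) ≠ 0), (by decide : (1:Fin 4) ≠ 2), (by decide : (1:Fin 4) ≠ 3), (by decide : (2:Fin 4) ≠ 0), (by decide : (2:Fin 4) ≠ 1), (by decide : (2:Fin 4) ≠ 3), (by decide : (3:Fin 4) ≠ 0), (by decide : (3:Fin 4) ≠ 1), (by decide : (3:Fin 4) ≠ 2), hS 1 0, hS 2 0, hS 3 0, hS 2 1, hS 3 1, hS 3 2, h00, h11, h22, h33]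
    field_simp
    linear_combination ((2) * S 1 2 * mcOf P * u 0 + (2) * S 0 2 * mcOf P * u 1 + (-2) * S 0 1 * mcOf P * u 2) * hadef + ((-2) * P 1 * S 0 2 * mcOf P + (2) * P 2 * S 0 1 * mcOf P + (-2) * P 0 * S 1 2 * mcOf P) * huu + ((-2) * S 1 2 * u 0 + (-2) * S 0 2 * u 1 + (2) * S 0 1 * u 2) * hm2
  constructor
  · intro h
    have e0 : alt3 (low u) (low P) (fun κ => ∑ σ, S κ σ * (u σ + P σ / mcOf P)) 1 2 3 = 0 := by
      have k := key0; rw [h 0, sub_self] at k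
      have k2 := k.symm; rw [div_eq_zero_iff] at k2
      exact k2.resolve_right hmane
    have e1 : alt3 (low u) (low P) (fun κ => ∑ σ, S κ σ * (u σ + P σ / mcOf P)) 0 2 3 = 0 := by
      have k := key1; rw [h 1, sub_self] at k
      have k2 := k.symm; rw [div_eq_zero_iff] at k2
      exact k2.resolve_right hmane
    have e2 : alt3 (low u) (low P) (fun κ => ∑ σ, S κ σ * (u σ + P σ / mcOf P)) 0 1 3 = 0 := by
      have k := key2; rw [h 2, sub_self] at k
      have k2 := k.symm
      rw [neg_div, neg_eq_zero, div_eq_zero_iff] at k2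
      exact k2.resolve_right hmane
    have e3 : alt3 (low u) (low P) (fun κ => ∑ σ, S κ σ * (u σ + P σ / mcOf P)) 0 1 2 = 0 := by
      have k := key3; rw [h 3, sub_self] at k
      have k2 := k.symm; rw [div_eq_zero_iff] at k2
      exact k2.resolve_right hmane
    exact alt3_all_zero _ _ _ e0 e1 e2 e3
  · intro h μ
    have k0 := key0; rw [h 1 2 3] at k0; simp only [neg_zero, zero_div] at k0
    have k1 := key1; rw [h 0 2 3] at k1; simp only [neg_zero, zero_div] at k1
    have k2 := key2; rw [h 0 1 3] at k2; simp only [neg_zero, zero_div] at k2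
    have k3 := key3; rw [h 0 1 2] at k3; simp only [neg_zero, zero_div] at k3
    fin_cases μ
    · exact sub_eq_zero.mp k0
    · exact sub_eq_zero.mp k1
    · exact sub_eq_zero.mp k2
    · exact sub_eq_zero.mp k3
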